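/- The number of distinct activation values at layer k of a GUHAT Transformer in informative normal form with H heads on inputs of length n over alphabet Σ is at most ((|Σ|+1)·n)^{(H+1)^k}. -/

import Mathlib

open Classical in
/-- The leftmost position maximizing the attention scores `a` (unique hard attention). -/
noncomputable def leftmostArgmax {n : ℕ} (hn : 0 < n) (a : Fin n → ℝ) : Fin n :=
  have : Nonempty (Fin n) := ⟨⟨0, hn⟩⟩
  (Finset.univ.filter (fun j => ∀ l, a l ≤ a j)).min'
    (by
      obtain ⟨j, hj⟩ := Finite.exists_max a
      exact ⟨j, Finset.mem_filter.mpr ⟨Finset.mem_univ _, hj⟩⟩)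

/-- A generalized (unique hard attention) Transformer over alphabet `σ`, with `K` layers
and `H` heads: arbitrary activation values `A`, an input function `f` (taking the symbol,
which may be the end-of-sequence marker `$ = Sum.inr ()`, the position, and the input
length), real-valued attention functions for each layer `k ∈ [1..K]` and head
`h ∈ [1..H]`, activation functions for each layer, and a `{0,1}`-valued output
function `g`. -/
structure GT (σ : Type) where
  K : ℕ
  H : ℕ
  A : Type
  f : (σ ⊕ Unit) → ℕ → ℕ → A
  fatt : ℕ → ℕ → A → A → ℝ
  fact : ℕ → A → (Fin H → A) → A
  g : A → Bool

namespace GT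

variable {σ : Type}

/-- The input sequence of symbols for input string `x`, with `$` appended. -/
def inputSeq (x : List σ) : Fin (x.length + 1) → (σ ⊕ Unit) := fun i =>
  if h : (i : ℕ) < x.length then Sum.inl (x.get ⟨i, h⟩) else Sum.inr ()

/-- Initial (layer-0) activation values `y⁰ᵢ = f(xᵢ, i, n)` (positions are `1`-based). -/
def y0 (T : GT σ) (x : List σ) : Fin (x.length + 1) → T.A := fun i =>
  T.f (inputSeq x i) ((i : ℕ) + 1) (x.length + 1)

/-- One layer of unique-hard-attention computation: each position attends, for each
head, to the leftmost position maximizing the attention score, and applies the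
activation function. Layers are numbered `1, …, K`. -/
noncomputable def layer (T : GT σ) {n : ℕ} (hn : 0 < n) (k : ℕ) (y : Fin n → T.A) :
    Fin n → T.A := fun i =>
  T.fact k (y i)
    (fun _h => y (leftmostArgmax hn (fun j => T.fatt k (_h : Fin T.H).val.succ (y i) (y j))))

/-- The activation values at layer `k` (layer `0` being the initial activations). -/
noncomputable def acts (T : GT σ) {n : ℕ} (hn : 0 < n) (y₀ : Fin n → T.A) :
    ℕ → Fin n → T.A
  | 0 => y₀
  | k + 1 => T.layer hn (k + 1) (T.acts hn y₀ k)

/-- `T` accepts `x` iff the output function applied to the final-layer activation at the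
last position of `x$` equals `1`. -/
noncomputable def accepts (T : GT σ) (x : List σ) : Prop :=
  T.g (T.acts (Nat.succ_pos _) (T.y0 x) T.K ⟨x.length, Nat.lt_succ_self _⟩) = true

/-- The language recognized by `T`: `L(T) = {x ∈ σ* : T accepts x$}`. -/
def lang (T : GT σ) : Set (List σ) := {x | T.accepts x}

end GT

/-- The type of activation values at layer `k` of a GUHAT in informative normal form:
layer-0 activations are triples `(σ, i, n)` with `σ ∈ Σ ∪ {$}`, and layer-`k+1`
activations are `(H+1)`-tuples of layer-`k` activations. -/
def NFAct (σ : Type) (H : ℕ) : ℕ → Type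
  | 0 => (σ ⊕ Unit) × ℕ × ℕ
  | k + 1 => NFAct σ H k × (Fin H → NFAct σ H k)

/-- A GUHAT Transformer in informative normal form, with `K` layers and `H` heads:
the input function returns the triple of its arguments, the activation functions return
the tuple of their arguments (both therefore built into the semantics), and the
attention function feeding layer `k+1` maps pairs of layer-`k` activation values to
nonnegative integers. -/
structure NFT (σ : Type) where
  K : ℕ
  H : ℕ
  fatt : (k : ℕ) → ℕ → NFAct σ H k → NFAct σ H k → ℕ
  g : NFAct σ H K → Bool

namespace NFT

variable {σ : Type}

/-- Initial activations for input `x$`: `f(σ,i,n) = (σ,i,n)` with `1`-based positions. -/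
def y0 (T : NFT σ) (x : List σ) : Fin (x.length + 1) → NFAct σ T.H 0 := fun i =>
  (GT.inputSeq x i, (i : ℕ) + 1, x.length + 1)

/-- The activation values of an informative-normal-form GUHAT at each layer, computed
with unique hard attention. -/
noncomputable def acts (T : NFT σ) {n : ℕ} (hn : 0 < n) (y₀ : Fin n → NFAct σ T.H 0) :
    (k : ℕ) → Fin n → NFAct σ T.H k
  | 0 => y₀
  | k + 1 => fun i =>
      (T.acts hn y₀ k i,
       fun h => T.acts hn y₀ k (leftmostArgmax hn
         (fun j => ((T.fatt k (h : Fin T.H).val.succ (T.acts hn y₀ k i)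
            (T.acts hn y₀ k j) : ℕ) : ℝ))))

/-- Acceptance: the output function applied to the final activation at the last
position equals `1`. -/
noncomputable def accepts (T : NFT σ) (x : List σ) : Prop :=
  T.g (T.acts (Nat.succ_pos _) (T.y0 x) T.K ⟨x.length, Nat.lt_succ_self _⟩) = true

/-- The language recognized by `T`. -/
def lang (T : NFT σ) : Set (List σ) := {x | T.accepts x}

/-- The set of activation values at layer `k` attained by `T` on some input of
length `n` (length counted including the end-of-sequence marker). -/
def reach (T : NFT σ) (n k : ℕ) : Set (NFAct σ T.H k) :=
  {y | ∃ (x : List σ) (i : Fin (x.length + 1)),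
    x.length + 1 = n ∧ T.acts (Nat.succ_pos _) (T.y0 x) k i = y}

/-- The normal-form range condition on attention values: each attention function
returns an integer in `[0..N−1]`, where `N` is the number of possible ordered pairs of
activation values at the previous layer. -/
def attBounded (T : NFT σ) : Prop :=
  ∀ (n k h : ℕ), ∀ y y' : NFAct σ T.H k, y ∈ T.reach n k → y' ∈ T.reach n k →
    T.fatt k h y y' < ((T.reach n k) ×ˢ (T.reach n k)).ncard

end NFT


open Classical in
lemma nft_reach_aux (σ : Type) [Fintype σ] (T : NFT σ) (n k : ℕ) :
    ∃ F : Finset (NFAct σ T.H k), (T.reach n k ⊆ ↑F) ∧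
      F.card ≤ ((Fintype.card σ + 1) * n) ^ ((T.H + 1) ^ k) := by
  induction k with
  | zero =>
    refine ⟨(Finset.univ : Finset (σ ⊕ Unit)) ×ˢ (Finset.Icc 1 n ×ˢ {n}), ?_, ?_⟩
    · rintro y ⟨x, i, hlen, rfl⟩
      show ((_, _, _) : (σ ⊕ Unit) × ℕ × ℕ) ∈ ((_ : Finset ((σ ⊕ Unit) × ℕ × ℕ)) : Set ((σ ⊕ Unit) × ℕ × ℕ))
      rw [Finset.mem_coe]
      simp only [Finset.mem_product, Finset.mem_univ, Finset.mem_Icc, Finset.mem_singleton]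
      refine ⟨trivial, ⟨Nat.le_add_left 1 _, ?_⟩, hlen⟩
      omega
    · have h1 : ((Finset.univ : Finset (σ ⊕ Unit)) ×ˢ
          ((Finset.Icc 1 n) ×ˢ ({n} : Finset ℕ))).card = (Fintype.card σ + 1) * n := by
        simp [Finset.card_product, Nat.card_Icc]
      rw [pow_zero, pow_one]
      exact le_of_eq h1
  | succ k ih =>
    obtain ⟨F, hsub, hcard⟩ := ih
    refine ⟨F ×ˢ Fintype.piFinset (fun _ : Fin T.H => F), ?_, ?_⟩
    · rintro y ⟨x, i, hlen, rfl⟩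
      show ((_, _) : NFAct σ T.H k × (Fin T.H → NFAct σ T.H k)) ∈ ((_ : Finset (NFAct σ T.H k × (Fin T.H → NFAct σ T.H k))) : Set (NFAct σ T.H k × (Fin T.H → NFAct σ T.H k)))
      rw [Finset.mem_coe, Finset.mem_product, Fintype.mem_piFinset]
      constructor
      · exact hsub ⟨x, i, hlen, rfl⟩
      · intro h
        exact hsub ⟨x, _, hlen, rfl⟩
    · show (F ×ˢ Fintype.piFinset (fun _ : Fin T.H => F) : Finset (NFAct σ T.H k × (Fin T.H → NFAct σ T.H k))).card ≤ _
      rw [Finset.card_product, Fintype.card_piFinset]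
      simp only [Finset.prod_const, Finset.card_univ, Fintype.card_fin]
      calc F.card * F.card ^ T.H = F.card ^ (T.H + 1) := by ring
        _ ≤ (((Fintype.card σ + 1) * n) ^ ((T.H + 1) ^ k)) ^ (T.H + 1) :=
            Nat.pow_le_pow_left hcard _
        _ = ((Fintype.card σ + 1) * n) ^ ((T.H + 1) ^ (k + 1)) := by
            rw [← pow_mul, pow_succ]

/-- The number of distinct activation values at layer `k` of a GUHAT Transformer in
informative normal form with `H` heads, on inputs of length `n` over a finite alphabet
`Σ`, is at most `((|Σ|+1)·n)^{(H+1)^k}`. -/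
theorem nft_reach_card_bound (σ : Type) [Fintype σ] (T : NFT σ) (n k : ℕ)
    (hk : k ≤ T.K) :
    (T.reach n k).ncard ≤ ((Fintype.card σ + 1) * n) ^ ((T.H + 1) ^ k) := by
  obtain ⟨F, hsub, hcard⟩ := nft_reach_aux σ T n k
  calc (T.reach n k).ncard ≤ (↑F : Set _).ncard :=
        Set.ncard_le_ncard hsub F.finite_toSet
    _ = F.card := Set.ncard_coe_finset F
    _ ≤ _ := hcard
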